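/- Suppose a system is dissipative with quadratic supply rate s(y,u) = [y;u]ᵀ Π [y;u], where Π has blocks Π_yy, Π_yu, Π_uu, and the storage function V is nonnegative with V(x_0)=0. If there exist positive reals α, β with I + α Π_yy ≺ 0 and the block matrix [[I + α Π_yy, α Π_yu],[α Π_yuᵀ, α Π_uu − β I]] ⪯ 0, then for every T, Σ_{t<T} ‖y_t‖² ≤ β Σ_{t<T} ‖u_t‖², i.e., the L₂ gain over [0,T) is at most √β. -/

import Mathlib

open Finset Matrix

/-- L₂-gain bound from quadratic dissipativity: if the system is dissipative with quadratic
supply rate given by the symmetric block matrix `Π = [[Πyy, Πyu],[Πyuᵀ, Πuu]]`, the storage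
is nonnegative with `V (x 0) = 0`, and there exist `α, β > 0` with `I + α Πyy ≺ 0` and
`[[I + α Πyy, α Πyu],[α Πyuᵀ, α Πuu − β I]] ⪯ 0`, then `Σ_{t<T} ‖y_t‖² ≤ β Σ_{t<T} ‖u_t‖²`. -/
theorem l2_gain_of_dissipative {n p m : ℕ}
    (x : ℕ → Fin n → ℝ) (y : ℕ → Fin p → ℝ) (u : ℕ → Fin m → ℝ)
    (V : (Fin n → ℝ) → ℝ)
    (Pyy : Matrix (Fin p) (Fin p) ℝ) (Pyu : Matrix (Fin p) (Fin m) ℝ)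
    (Puu : Matrix (Fin m) (Fin m) ℝ)
    (hPyy : Pyy.IsSymm) (hPuu : Puu.IsSymm)
    (hVnonneg : ∀ ξ, 0 ≤ V ξ) (hV0 : V (x 0) = 0)
    (hdiss : ∀ t : ℕ,
      V (x (t + 1)) - V (x t) ≤
        (Sum.elim (y t) (u t)) ⬝ᵥ
          (Matrix.fromBlocks Pyy Pyu Pyuᵀ Puu).mulVec (Sum.elim (y t) (u t)))
    (α β : ℝ) (hα : 0 < α) (hβ : 0 < β)
    (hneg : (-(1 + α • Pyy)).PosDef)
    (hblock : (-(Matrix.fromBlocks (1 + α • Pyy) (α • Pyu)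
        (α • Pyuᵀ) (α • Puu - β • 1))).PosSemidef) :
    ∀ T : ℕ, ∑ t ∈ range T, (y t) ⬝ᵥ (y t) ≤ β * ∑ t ∈ range T, (u t) ⬝ᵥ (u t) := by
  intro T
  -- pointwise inequality from the block PSD condition
  have key : ∀ t : ℕ,
      (y t) ⬝ᵥ (y t) + α * ((Sum.elim (y t) (u t)) ⬝ᵥ
        (Matrix.fromBlocks Pyy Pyu Pyuᵀ Puu).mulVec (Sum.elim (y t) (u t)))
      ≤ β * ((u t) ⬝ᵥ (u t)) := by
    intro t
    have h := hblock.dotProduct_mulVec_nonneg (Sum.elim (y t) (u t))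
    set z := Sum.elim (y t) (u t) with hz
    have hexp : z ⬝ᵥ (Matrix.fromBlocks (1 + α • Pyy) (α • Pyu)
        (α • Pyuᵀ) (α • Puu - β • 1)).mulVec z
        = (y t) ⬝ᵥ (y t) + α * (z ⬝ᵥ (Matrix.fromBlocks Pyy Pyu Pyuᵀ Puu).mulVec z)
          - β * ((u t) ⬝ᵥ (u t)) := by
      rw [hz, Matrix.fromBlocks_mulVec, Matrix.fromBlocks_mulVec,
        sumElim_dotProduct_sumElim, sumElim_dotProduct_sumElim]
      simp [Matrix.add_mulVec, Matrix.sub_mulVec, Matrix.smul_mulVec,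
        Matrix.one_mulVec, dotProduct_add, dotProduct_sub, dotProduct_smul,
        smul_eq_mul]
      ring
    have h' : z ⬝ᵥ (Matrix.fromBlocks (1 + α • Pyy) (α • Pyu)
        (α • Pyuᵀ) (α • Puu - β • 1)).mulVec z ≤ 0 := by
      have := h
      rw [Matrix.neg_mulVec, dotProduct_neg, star_trivial] at this
      linarith [this]
    rw [hexp] at h'
    linarith
  -- sum of supply rates is ≥ 0 (telescoping with nonneg storage)
  have hsum : 0 ≤ ∑ t ∈ range T, (Sum.elim (y t) (u t)) ⬝ᵥ
      (Matrix.fromBlocks Pyy Pyu Pyuᵀ Puu).mulVec (Sum.elim (y t) (u t)) := by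
    have htel : V (x T) - V (x 0) ≤ ∑ t ∈ range T, (Sum.elim (y t) (u t)) ⬝ᵥ
        (Matrix.fromBlocks Pyy Pyu Pyuᵀ Puu).mulVec (Sum.elim (y t) (u t)) := by
      induction T with
      | zero => simp
      | succ T ih =>
        rw [Finset.sum_range_succ]
        have := hdiss T
        linarith
    have := hVnonneg (x T)
    linarith [htel, hV0]
  have hsum2 : ∑ t ∈ range T, ((y t) ⬝ᵥ (y t) + α * ((Sum.elim (y t) (u t)) ⬝ᵥ
      (Matrix.fromBlocks Pyy Pyu Pyuᵀ Puu).mulVec (Sum.elim (y t) (u t))))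
      ≤ ∑ t ∈ range T, β * ((u t) ⬝ᵥ (u t)) :=
    Finset.sum_le_sum fun t _ => key t
  rw [Finset.sum_add_distrib, ← Finset.mul_sum, ← Finset.mul_sum] at hsum2
  nlinarith [mul_nonneg hα.le hsum]
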